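/- Consider the qubit amplitude-damping channel Λ_{1,ξ} with Kraus operators F_1 = diag(1, √ξ) and F_3 = [[0, √(1−ξ)],[0,0]]. Then ‖(Λ_{1,1/2} ⊗ I)(|Φ_2⟩⟨Φ_2|) − (1/2)(Λ_{1,0} ⊗ I)(|Φ_2⟩⟨Φ_2|)‖_1 = √2/2, while ‖Λ_{1,1/2}(|2⟩⟨2|) − (1/2)Λ_{1,0}(|2⟩⟨2|)‖_1 = 1/2; in particular the maximally entangled input gives a strictly larger trace-norm distance. -/

import Mathlib

open ComplexOrder

open scoped Matrix

open Kronecker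

/-- The square root of a positive semidefinite matrix, as in the older Mathlib
(removed there since). -/
noncomputable def Matrix.PosSemidef.sqrt {𝕜 : Type*} [RCLike 𝕜] {n : Type*} [Fintype n]
    [DecidableEq n] {A : Matrix n n 𝕜} (hA : A.PosSemidef) : Matrix n n 𝕜 :=
  hA.1.eigenvectorUnitary.1 * Matrix.diagonal ((↑) ∘ (√·) ∘ hA.1.eigenvalues) *
    (star hA.1.eigenvectorUnitary : Matrix n n 𝕜)

/-- The trace norm ‖A‖₁ = tr √(A†A). -/
noncomputable def traceNorm {n : Type*} [Fintype n] [DecidableEq n]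
    (A : Matrix n n ℂ) : ℝ :=
  ((Matrix.posSemidef_conjTranspose_mul_self A).sqrt.trace).re

/-- Kraus operator F₁ = diag(1, √ξ) of the amplitude damping channel. -/
noncomputable def F1 (ξ : ℝ) : Matrix (Fin 2) (Fin 2) ℂ :=
  !![1, 0; 0, (Real.sqrt ξ : ℂ)]

/-- Kraus operator F₃ = [[0, √(1−ξ)],[0,0]] of the amplitude damping channel. -/
noncomputable def F3 (ξ : ℝ) : Matrix (Fin 2) (Fin 2) ℂ :=
  !![0, (Real.sqrt (1 - ξ) : ℂ); 0, 0]

/-- The amplitude damping channel Λ_{1,ξ}. -/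
noncomputable def damp (ξ : ℝ) (ρ : Matrix (Fin 2) (Fin 2) ℂ) :
    Matrix (Fin 2) (Fin 2) ℂ :=
  F1 ξ * ρ * (F1 ξ)ᴴ + F3 ξ * ρ * (F3 ξ)ᴴ

/-- The channel Λ_{1,ξ} ⊗ I on two qubits. -/
noncomputable def dampI (ξ : ℝ) (ρ : Matrix (Fin 2 × Fin 2) (Fin 2 × Fin 2) ℂ) :
    Matrix (Fin 2 × Fin 2) (Fin 2 × Fin 2) ℂ :=
  (F1 ξ ⊗ₖ (1 : Matrix (Fin 2) (Fin 2) ℂ)) * ρ * (F1 ξ ⊗ₖ (1 : Matrix (Fin 2) (Fin 2) ℂ))ᴴ +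
    (F3 ξ ⊗ₖ (1 : Matrix (Fin 2) (Fin 2) ℂ)) * ρ * (F3 ξ ⊗ₖ (1 : Matrix (Fin 2) (Fin 2) ℂ))ᴴ

/-- The two-qubit maximally entangled state |Φ₂⟩⟨Φ₂|. -/
noncomputable def Phi2 : Matrix (Fin 2 × Fin 2) (Fin 2 × Fin 2) ℂ :=
  Matrix.of fun p q => if p.1 = p.2 ∧ q.1 = q.2 then (1 / 2 : ℂ) else 0


/- ======================= auxiliary lemmas ======================= -/

open scoped MatrixOrder in
lemma posSemidef_sqrt_eq_of_mul_self {n : Type*} [Fintype n] [DecidableEq n]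
    {B S : Matrix n n ℂ} (hB : B.PosSemidef) (hS : S.PosSemidef) (h : S * S = B) :
    hB.sqrt = S := by
  have h1 : CFC.sqrt B = S := CFC.sqrt_unique h hS.nonneg
  rw [← h1, CFC.sqrt_eq_real_sqrt B hB.nonneg, cfcₙ_eq_cfc, hB.1.cfc_eq, Matrix.IsHermitian.cfc,
    Matrix.PosSemidef.sqrt]
  simp

lemma traceNorm_eq_of_sqrt {n : Type*} [Fintype n] [DecidableEq n]
    (A S : Matrix n n ℂ) (hS : S.PosSemidef) (h : S ^ 2 = Aᴴ * A) :
    traceNorm A = S.trace.re := by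
  rw [traceNorm, posSemidef_sqrt_eq_of_mul_self _ hS (by rw [← h, sq])]

noncomputable def aR : ℝ := Real.sqrt ((Real.sqrt 2 + 1)/8)
noncomputable def bR : ℝ := Real.sqrt ((Real.sqrt 2 - 1)/8)

noncomputable def A4 : Matrix (Fin 2 × Fin 2) (Fin 2 × Fin 2) ℂ :=
  Matrix.of fun p q =>
    if p = (0,0) ∧ q = (0,0) then 1/4
    else if (p = (0,0) ∧ q = (1,1)) ∨ (p = (1,1) ∧ q = (0,0)) then (Real.sqrt 2 : ℂ)/4
    else if p = (1,1) ∧ q = (1,1) then 1/4 else 0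

noncomputable def S4 : Matrix (Fin 2 × Fin 2) (Fin 2 × Fin 2) ℂ :=
  Matrix.of fun p q =>
    if p = (0,0) ∧ q = (0,0) then (Real.sqrt 2 : ℂ)/4
    else if (p = (0,0) ∧ q = (1,1)) ∨ (p = (1,1) ∧ q = (0,0)) then 1/4
    else if p = (1,1) ∧ q = (1,1) then (Real.sqrt 2 : ℂ)/4 else 0

noncomputable def C4 : Matrix (Fin 2 × Fin 2) (Fin 2 × Fin 2) ℂ :=
  Matrix.of fun p q =>
    if p = (0,0) ∧ (q = (0,0) ∨ q = (1,1)) then (aR : ℂ)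
    else if p = (1,1) ∧ q = (0,0) then (bR : ℂ)
    else if p = (1,1) ∧ q = (1,1) then -(bR : ℂ)
    else 0

lemma one_le_sqrt2 : (1:ℝ) ≤ Real.sqrt 2 := by
  rw [show (1:ℝ) = Real.sqrt 1 by simp]; exact Real.sqrt_le_sqrt (by norm_num)

lemma one_lt_sqrt2 : (1:ℝ) < Real.sqrt 2 := by
  nlinarith [Real.sq_sqrt (by norm_num : (0:ℝ) ≤ 2), Real.sqrt_nonneg 2]

lemma ha : (aR : ℂ) * (aR : ℂ) = ((Real.sqrt 2 : ℂ) + 1)/8 := by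
  rw [aR, ← Complex.ofReal_mul, Real.mul_self_sqrt (by positivity)]; push_cast; ring

lemma hb : (bR : ℂ) * (bR : ℂ) = ((Real.sqrt 2 : ℂ) - 1)/8 := by
  rw [bR, ← Complex.ofReal_mul, Real.mul_self_sqrt (by nlinarith [one_le_sqrt2])]
  push_cast; ring

lemma hsq2 : (Real.sqrt 2 : ℂ) * (Real.sqrt 2 : ℂ) = 2 := by
  rw [← Complex.ofReal_mul, Real.mul_self_sqrt (by norm_num)]; norm_num

lemma hsq2pow : (Real.sqrt 2 : ℂ)^2 = 2 := by rw [sq]; exact hsq2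

lemma hinv2 : ((Real.sqrt 2 : ℂ))⁻¹ = (Real.sqrt 2 : ℂ)/2 := by
  have hne : (Real.sqrt 2:ℂ) ≠ 0 := by
    simp [Real.sqrt_ne_zero'.2 (by norm_num : (0:ℝ) < 2)]
  rw [inv_eq_one_div, div_eq_div_iff hne two_ne_zero, one_mul]
  exact hsq2.symm

lemma hsqhalf : (Real.sqrt (1/2) : ℂ) * (Real.sqrt (1/2) : ℂ) = 1/2 := by
  rw [← Complex.ofReal_mul, Real.mul_self_sqrt (by norm_num)]; norm_num

lemma std11 : (Matrix.single 1 1 1 : Matrix (Fin 2) (Fin 2) ℂ) = !![0,0;0,1] := by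
  ext i j; fin_cases i <;> fin_cases j <;> simp [Matrix.single]

lemma hinv : ((Real.sqrt 2 : ℂ))⁻¹ * ((Real.sqrt 2 : ℂ))⁻¹ = 1/2 := by
  rw [← mul_inv, hsq2]; norm_num

lemma A2_eq : damp (1 / 2) (Matrix.single 1 1 1)
        - ((1 : ℝ) / 2 : ℂ) • damp 0 (Matrix.single 1 1 1) = !![0,0;0,(1/2:ℂ)] := by
  ext i j
  fin_cases i <;> fin_cases j <;>
  · simp only [damp, F1, F3, std11, Matrix.sub_apply, Matrix.add_apply, Matrix.smul_apply,
      Matrix.mul_apply, Fin.sum_univ_two, Matrix.conjTranspose_apply,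
      Matrix.cons_val', Matrix.cons_val_zero, Matrix.cons_val_one, Matrix.head_cons,
      Matrix.head_fin_const, Matrix.empty_val', Matrix.cons_val_fin_one, Matrix.of_apply,
      RCLike.star_def, map_ofNat, Complex.conj_ofReal, map_one, map_zero, star_one, star_zero]
    norm_num [hsqhalf, hinv]

set_option maxHeartbeats 2000000 in
lemma A4_eq : dampI (1/2) Phi2 - ((1:ℝ)/2 : ℂ) • dampI 0 Phi2 = A4 := by
  ext p q
  fin_cases p <;> fin_cases q <;>
  · simp only [dampI, F1, F3, Phi2, A4, Matrix.sub_apply, Matrix.add_apply, Matrix.smul_apply,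
      Matrix.mul_apply, Fintype.sum_prod_type, Fin.sum_univ_two, Matrix.conjTranspose_apply,
      Matrix.kroneckerMap_apply, Matrix.one_apply, Matrix.of_apply,
      Matrix.cons_val', Matrix.cons_val_zero, Matrix.cons_val_one, Matrix.head_cons,
      Matrix.empty_val', Matrix.cons_val_fin_one, Complex.conj_ofReal,
      RCLike.star_def, map_one, map_zero]
    norm_num [hinv2, map_ofNat] <;> (try ring_nf) <;> (try simp [hsq2pow]) <;> (try norm_num)

lemma S4_eq_CHC : S4 = C4ᴴ * C4 := by
  ext p q
  fin_cases p <;> fin_cases q <;>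
  · simp only [S4, C4, Matrix.mul_apply, Fintype.sum_prod_type, Fin.sum_univ_two,
      Matrix.conjTranspose_apply, Matrix.of_apply, RCLike.star_def, Complex.conj_ofReal,
      map_neg, map_zero]
    norm_num [ha, hb] <;> (try ring_nf)

lemma S4_psd : S4.PosSemidef := by
  rw [S4_eq_CHC]; exact Matrix.posSemidef_conjTranspose_mul_self C4

lemma S4_sq : S4 ^ 2 = A4ᴴ * A4 := by
  rw [pow_two]
  ext p q
  fin_cases p <;> fin_cases q <;>
  · simp only [S4, A4, Matrix.mul_apply, Fintype.sum_prod_type, Fin.sum_univ_two,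
      Matrix.conjTranspose_apply, Matrix.of_apply, RCLike.star_def, Complex.conj_ofReal,
      map_zero, map_one, map_ofNat, map_div₀]
    norm_num [hsq2, map_ofNat, map_inv₀] <;> (try ring_nf) <;> (try simp [hsq2pow]) <;> (try norm_num)

lemma S4_trace : S4.trace.re = Real.sqrt 2 / 2 := by
  have : S4.trace = ((Real.sqrt 2 / 2 : ℝ) : ℂ) := by
    simp only [Matrix.trace, Matrix.diag, S4, Fintype.sum_prod_type, Fin.sum_univ_two,
      Matrix.of_apply]
    norm_num
    push_cast
    ring
  rw [this, Complex.ofReal_re]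

lemma S2_psd : (!![0,0;0,(1/2:ℂ)] : Matrix (Fin 2) (Fin 2) ℂ).PosSemidef := by
  have h : (!![0,0;0,(1/2:ℂ)] : Matrix (Fin 2) (Fin 2) ℂ)
      = (!![0,0;0,((Real.sqrt (1/2) : ℝ) : ℂ)])ᴴ * !![0,0;0,((Real.sqrt (1/2) : ℝ) : ℂ)] := by
    ext i j
    fin_cases i <;> fin_cases j <;>
    · simp only [Matrix.mul_apply, Fin.sum_univ_two, Matrix.conjTranspose_apply,
        Matrix.cons_val', Matrix.cons_val_zero, Matrix.cons_val_one, Matrix.head_cons,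
        Matrix.empty_val', Matrix.cons_val_fin_one, Matrix.of_apply,
        RCLike.star_def, Complex.conj_ofReal, star_zero]
      norm_num [hsqhalf, hinv]
  rw [h]; exact Matrix.posSemidef_conjTranspose_mul_self _

lemma S2_sq : (!![0,0;0,(1/2:ℂ)] : Matrix (Fin 2) (Fin 2) ℂ) ^ 2
    = (!![0,0;0,(1/2:ℂ)] : Matrix (Fin 2) (Fin 2) ℂ)ᴴ * !![0,0;0,(1/2:ℂ)] := by
  rw [pow_two]
  ext i j
  fin_cases i <;> fin_cases j <;>
  · simp only [Matrix.mul_apply, Fin.sum_univ_two, Matrix.conjTranspose_apply,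
      Matrix.cons_val', Matrix.cons_val_zero, Matrix.cons_val_one, Matrix.head_cons,
      Matrix.empty_val', Matrix.cons_val_fin_one, Matrix.of_apply,
      RCLike.star_def, star_zero, map_div₀, map_one, map_ofNat]
    norm_num [map_ofNat, map_inv₀]

/-- For the amplitude damping channel, the maximally entangled input gives a strictly
    larger trace-norm distance than the input |2⟩⟨2|. -/
theorem stmt14 :
    traceNorm (dampI (1 / 2) Phi2 - ((1 : ℝ) / 2 : ℂ) • dampI 0 Phi2) = Real.sqrt 2 / 2 ∧
    traceNorm (damp (1 / 2) (Matrix.single 1 1 1)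
        - ((1 : ℝ) / 2 : ℂ) • damp 0 (Matrix.single 1 1 1)) = 1 / 2 ∧
    traceNorm (damp (1 / 2) (Matrix.single 1 1 1)
        - ((1 : ℝ) / 2 : ℂ) • damp 0 (Matrix.single 1 1 1)) <
      traceNorm (dampI (1 / 2) Phi2 - ((1 : ℝ) / 2 : ℂ) • dampI 0 Phi2) := by
  have h1 : traceNorm (dampI (1 / 2) Phi2 - ((1 : ℝ) / 2 : ℂ) • dampI 0 Phi2)
      = Real.sqrt 2 / 2 := by
    rw [A4_eq, traceNorm_eq_of_sqrt A4 S4 S4_psd S4_sq, S4_trace]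
  have h2 : traceNorm (damp (1 / 2) (Matrix.single 1 1 1)
        - ((1 : ℝ) / 2 : ℂ) • damp 0 (Matrix.single 1 1 1)) = 1 / 2 := by
    rw [A2_eq, traceNorm_eq_of_sqrt _ _ S2_psd S2_sq]
    simp [Matrix.trace, Matrix.diag, Fin.sum_univ_two]
  refine ⟨h1, h2, ?_⟩
  rw [h1, h2]
  linarith [one_lt_sqrt2]
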